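/- arXiv:1306.5353 — 3 statements merged into one kernel-verified Lean document; each statement's English description precedes it below -/
import Mathlib

section
/- Let N ≥ 1 be an integer, t₀ > 0, ρ ∈ (0,1) and K ≥ 2 real numbers, and let G, M : (0,∞) → M_N(ℂ) be two families of matrices such that (G_t + M_t)(G_s + M_s) = G_{t+s} + M_{t+s} for all s, t > 0, and ‖M_u‖ ≤ K ρ^u for all u > 0. Set Γ := max( 2ρ^{t₀}, sup_{w ∈ [t₀, 2t₀)} ‖G_w‖ ) and assume Γ < ∞. Then for every integer n ≥ 1 and every v ∈ [0, t₀): ‖G_{n t₀ + v}‖ ≤ (1 + (1+K)(n−1)) · Γ · (Γ + K ρ^{t₀})^{n−1}. -/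
noncomputable section

attribute [local instance] Matrix.linftyOpNormedRing

/-- The `L∞`-operator norm on `N × N` complex matrices:
`‖A‖ = max_k ∑ ℓ |A k ℓ|`. -/
def mnorm {N : ℕ} (A : Matrix (Fin N) (Fin N) ℂ) : ℝ :=
  ⨆ k : Fin N, ∑ ℓ : Fin N, ‖A k ℓ‖

lemma mnorm_eq_norm {N : ℕ} (A : Matrix (Fin N) (Fin N) ℂ) : mnorm A = ‖A‖ := by
  rw [mnorm, Matrix.linfty_opNorm_def]
  rcases Nat.eq_zero_or_pos N with h | h
  · subst h; simp
  · have : Nonempty (Fin N) := Fin.pos_iff_nonempty.mp h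
    rw [← Finset.sup'_univ_eq_ciSup, ← Finset.sup'_eq_sup Finset.univ_nonempty]
    rw [Finset.comp_sup'_eq_sup'_comp _ (fun x : NNReal => (x : ℝ))
      (fun x y => NNReal.coe_max x y)]
    congr 1; ext i
    simp [Function.comp, NNReal.coe_sum]

theorem stmt11 (N : ℕ) (hN : 1 ≤ N) (t₀ ρ K : ℝ)
    (ht₀ : 0 < t₀) (hρ0 : 0 < ρ) (hρ1 : ρ < 1) (hK : 2 ≤ K)
    (G M : ℝ → Matrix (Fin N) (Fin N) ℂ)
    (hSG : ∀ s t : ℝ, 0 < s → 0 < t →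
      (G t + M t) * (G s + M s) = G (t + s) + M (t + s))
    (hM : ∀ u : ℝ, 0 < u → mnorm (M u) ≤ K * ρ ^ u)
    (hbdd : BddAbove ((fun w => mnorm (G w)) '' Set.Ico t₀ (2 * t₀))) :
    ∀ n : ℕ, 1 ≤ n → ∀ v : ℝ, 0 ≤ v → v < t₀ →
      mnorm (G (n * t₀ + v)) ≤
        (1 + (1 + K) * ((n : ℝ) - 1)) *
          (max (2 * ρ ^ t₀) (sSup ((fun w => mnorm (G w)) '' Set.Ico t₀ (2 * t₀)))) *
          (max (2 * ρ ^ t₀) (sSup ((fun w => mnorm (G w)) '' Set.Ico t₀ (2 * t₀)))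
            + K * ρ ^ t₀) ^ (n - 1) := by
  intro n hn v hv0 hvt
  set Γ : ℝ := max (2 * ρ ^ t₀) (sSup ((fun w => mnorm (G w)) '' Set.Ico t₀ (2 * t₀)))
    with hΓdef
  have hρt : 0 < ρ ^ t₀ := Real.rpow_pos_of_pos hρ0 _
  have hΓ2 : 2 * ρ ^ t₀ ≤ Γ := le_max_left _ _
  have hΓpos : 0 < Γ := lt_of_lt_of_le (by positivity) hΓ2
  have hK0 : (0:ℝ) < K := by linarith
  have hGle : ∀ w : ℝ, t₀ ≤ w → w < 2 * t₀ → ‖G w‖ ≤ Γ := by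
    intro w h1 h2
    rw [← mnorm_eq_norm]
    exact le_trans (le_csSup hbdd ⟨w, ⟨h1, h2⟩, rfl⟩) (le_max_right _ _)
  have hρmono : ∀ u : ℝ, t₀ ≤ u → ρ ^ u ≤ ρ ^ t₀ := fun u hu =>
    Real.rpow_le_rpow_of_exponent_ge hρ0 hρ1.le hu
  set B : ℝ := Γ + K * ρ ^ t₀ with hBdef
  have hΓB : Γ ≤ B := le_add_of_nonneg_right (by positivity)
  have hMle : ∀ u : ℝ, 0 < u → ‖M u‖ ≤ K * ρ ^ u := by
    intro u hu; rw [← mnorm_eq_norm]; exact hM u hu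
  have hAle : ∀ w : ℝ, t₀ ≤ w → w < 2 * t₀ → ‖G w + M w‖ ≤ B := by
    intro w h1 h2
    calc ‖G w + M w‖ ≤ ‖G w‖ + ‖M w‖ := norm_add_le _ _
      _ ≤ Γ + K * ρ ^ t₀ := add_le_add (hGle w h1 h2)
          (le_trans (hMle w (lt_of_lt_of_le ht₀ h1))
            (mul_le_mul_of_nonneg_left (hρmono w h1) hK0.le))
  -- the semigroup
  set A : ℝ → Matrix (Fin N) (Fin N) ℂ := fun u => G u + M u with hAdef
  have hprod : ∀ m : ℕ, A (t₀ + v) * (A t₀) ^ m = A ((m + 1) * t₀ + v) := by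
    intro m
    induction m with
    | zero => simp [hAdef]
    | succ m ih =>
      have hpos : 0 < (m + 1 : ℝ) * t₀ + v := by positivity
      calc A (t₀ + v) * A t₀ ^ (m + 1)
          = (A (t₀ + v) * A t₀ ^ m) * A t₀ := by rw [pow_succ, mul_assoc]
        _ = A ((m + 1) * t₀ + v) * A t₀ := by rw [ih]
        _ = A (((m + 1) * t₀ + v) + t₀) := hSG t₀ ((m + 1) * t₀ + v) ht₀ hpos
        _ = A (((m + 1 : ℕ) + 1) * t₀ + v) := by congr 1; push_cast; ring
  rw [mnorm_eq_norm]
  rcases eq_or_lt_of_le hn with h1 | h2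
  · -- n = 1
    subst h1
    have h := hGle (t₀ + v) (by linarith) (by linarith)
    simpa using h
  · -- n ≥ 2
    obtain ⟨m, rfl⟩ : ∃ m, n = m + 1 := ⟨n - 1, (Nat.succ_pred_eq_of_pos (by omega)).symm⟩
    have hm : 1 ≤ m := by omega
    have hm0 : 0 < m := hm
    have hBpos : 0 < B := lt_of_lt_of_le hΓpos hΓB
    have hBm : (0:ℝ) ≤ B ^ m := by positivity
    have hposn : (0:ℝ) < ((m : ℝ) + 1) * t₀ + v := by positivity
    -- bound on A ((m+1) t₀ + v)
    have hA1 : ‖A (t₀ + v)‖ ≤ B := hAle (t₀ + v) (by linarith) (by linarith)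
    have hA2 : ‖A t₀‖ ≤ B := hAle t₀ le_rfl (by linarith)
    have hApow : ‖A t₀ ^ m‖ ≤ B ^ m :=
      le_trans (norm_pow_le' (A t₀) hm0) (pow_le_pow_left₀ (norm_nonneg _) hA2 m)
    have hAfull : ‖A (((m : ℝ) + 1) * t₀ + v)‖ ≤ B * B ^ m := by
      rw [← hprod m]
      exact le_trans (norm_mul_le _ _)
        (mul_le_mul hA1 hApow (norm_nonneg _) hBpos.le)
    -- bound on M ((m+1) t₀ + v)
    have hrpow : ρ ^ (((m : ℝ) + 1) * t₀ + v) ≤ ρ ^ t₀ * (ρ ^ t₀) ^ m := by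
      have h1 : ρ ^ (((m : ℝ) + 1) * t₀ + v) ≤ ρ ^ (((m : ℝ) + 1) * t₀) :=
        Real.rpow_le_rpow_of_exponent_ge hρ0 hρ1.le (le_add_of_nonneg_right hv0)
      have h2 : ρ ^ (((m : ℝ) + 1) * t₀) = ρ ^ t₀ * (ρ ^ t₀) ^ m := by
        rw [mul_comm ((m : ℝ) + 1) t₀, Real.rpow_mul hρ0.le]
        rw [show ((m : ℝ) + 1) = ((m + 1 : ℕ) : ℝ) by push_cast; ring,
          Real.rpow_natCast]
        ring
      linarith
    have hMfull : ‖M (((m : ℝ) + 1) * t₀ + v)‖ ≤ K * (ρ ^ t₀ * (ρ ^ t₀) ^ m) :=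
      le_trans (hMle _ hposn) (mul_le_mul_of_nonneg_left hrpow hK0.le)
    -- combine
    have hGfull : ‖G (((m : ℝ) + 1) * t₀ + v)‖ ≤ B * B ^ m + K * (ρ ^ t₀ * (ρ ^ t₀) ^ m) := by
      have hsplit : G (((m : ℝ) + 1) * t₀ + v)
          = A (((m : ℝ) + 1) * t₀ + v) - M (((m : ℝ) + 1) * t₀ + v) := by
        simp [hAdef]
      rw [hsplit]
      exact le_trans (norm_sub_le _ _) (add_le_add hAfull hMfull)
    -- numeric estimates
    have hρB : ρ ^ t₀ ≤ B := by linarith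
    have hρpow : (ρ ^ t₀) ^ m ≤ B ^ m := pow_le_pow_left₀ hρt.le hρB m
    have hcoef : (2:ℝ) + K ≤ 1 + (1 + K) * (((m + 1 : ℕ) : ℝ) - 1) := by
      have : (1:ℝ) ≤ ((m + 1 : ℕ) : ℝ) - 1 := by
        push_cast
        have : (1:ℝ) ≤ (m : ℝ) := by exact_mod_cast hm
        linarith
      nlinarith
    have hmain : ‖G (((m : ℝ) + 1) * t₀ + v)‖ ≤ (1 + K) * Γ * B ^ m := by
      have hBle : B ≤ (1 + K / 2) * Γ := by
        have : K * ρ ^ t₀ ≤ K / 2 * Γ := by nlinarith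
        rw [hBdef]; linarith
      have hKρ : K * ρ ^ t₀ ≤ K / 2 * Γ := by nlinarith
      calc ‖G (((m : ℝ) + 1) * t₀ + v)‖
          ≤ B * B ^ m + K * (ρ ^ t₀ * (ρ ^ t₀) ^ m) := hGfull
        _ ≤ (1 + K / 2) * Γ * B ^ m + K / 2 * Γ * B ^ m := by
            have h3 : K * (ρ ^ t₀ * (ρ ^ t₀) ^ m) ≤ K / 2 * Γ * B ^ m := by
              calc K * (ρ ^ t₀ * (ρ ^ t₀) ^ m) = (K * ρ ^ t₀) * (ρ ^ t₀) ^ m := by ring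
                _ ≤ (K / 2 * Γ) * B ^ m :=
                  mul_le_mul hKρ hρpow (by positivity) (by positivity)
            have h4 : B * B ^ m ≤ (1 + K / 2) * Γ * B ^ m :=
              mul_le_mul_of_nonneg_right hBle hBm
            linarith
        _ = (1 + K) * Γ * B ^ m := by ring
    have hcast : ((m + 1 : ℕ) : ℝ) = (m : ℝ) + 1 := by push_cast; ring
    rw [hcast, Nat.add_sub_cancel]
    refine le_trans hmain ?_
    have : (1 : ℝ) + K ≤ 1 + (1 + K) * (((m : ℝ) + 1) - 1) := by
      rw [← hcast]; linarith [hcoef]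
    exact mul_le_mul_of_nonneg_right (mul_le_mul_of_nonneg_right this hΓpos.le) hBm
end
end

section
/- Fix k ∈ Fin N and q > 0, and let (𝒴_{k,ℓ,q})_{ℓ ∈ Fin N} be bounded positive measures on E with Lebesgue decomposition 𝒴_{k,ℓ,q} = g_{k,ℓ,q}·Leb + μ_{k,ℓ,q}, where each g_{k,ℓ,q} : E → [0,∞) is measurable and each μ_{k,ℓ,q} is singular with respect to Lebesgue measure. Assume the absolutely continuous part is nonzero: ∫_E Σ_ℓ g_{k,ℓ,q}(y) dy > 0. Then there exist no a ∈ E, function θ : Fin N → E, and closed additive subgroup F of E with F ≠ E, such that for every ℓ ∈ Fin N the measure 𝒴_{k,ℓ,q} gives zero mass to the complement of the coset θ(k) − θ(ℓ) + a + F; that is, the lattice relation 𝒴_{k,ℓ,q}( E ∖ { θ(k) − θ(ℓ) + a + f : f ∈ F } ) = 0 for all ℓ is impossible. -/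
open MeasureTheory Pointwise

noncomputable section

abbrev E (d : ℕ) : Type := EuclideanSpace ℝ (Fin d)

/-- A proper closed additive subgroup of Euclidean space has Lebesgue measure zero. -/
lemma volume_closed_proper_addSubgroup_eq_zero (d : ℕ) (F : AddSubgroup (E d))
    (hFcl : IsClosed (F : Set (E d))) (hFne : (F : Set (E d)) ≠ Set.univ) :
    (volume : Measure (E d)) (F : Set (E d)) = 0 := by
  by_contra h0
  have hpos : 0 < (volume : Measure (E d)) (F : Set (E d)) := pos_iff_ne_zero.mpr h0
  have hnhds : (F : Set (E d)) - (F : Set (E d)) ∈ nhds (0 : E d) :=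
    MeasureTheory.Measure.sub_mem_nhds_zero_of_addHaar_pos volume _
      hFcl.measurableSet hpos
  have hsub : (F : Set (E d)) - (F : Set (E d)) ⊆ (F : Set (E d)) := by
    rintro x ⟨y, hy, z, hz, rfl⟩
    exact sub_mem hy hz
  have hopen : IsOpen (F : Set (E d)) :=
    AddSubgroup.isOpen_of_mem_nhds F (Filter.mem_of_superset hnhds hsub)
  have : IsClopen (F : Set (E d)) := ⟨hFcl, hopen⟩
  exact hFne (this.eq_univ ⟨0, F.zero_mem⟩)

theorem stmt13 (N d : ℕ) (hN : 1 ≤ N) (hd : 1 ≤ d)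
    (k : Fin N) (q : ℝ) (hq : 0 < q)
    (Y : Fin N → Measure (E d)) (hYfin : ∀ ℓ, IsFiniteMeasure (Y ℓ))
    (g : Fin N → E d → ℝ) (μs : Fin N → Measure (E d))
    (hgmeas : ∀ ℓ, Measurable (g ℓ)) (hgpos : ∀ ℓ y, 0 ≤ g ℓ y)
    (hsing : ∀ ℓ, (μs ℓ) ⟂ₘ (volume : Measure (E d)))
    (hdec : ∀ ℓ, Y ℓ = volume.withDensity (fun y => ENNReal.ofReal (g ℓ y)) + μs ℓ)
    (hac : 0 < ∫ y, (∑ ℓ, g ℓ y) ∂(volume : Measure (E d))) :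
    ¬ ∃ (a : E d) (θ : Fin N → E d) (F : AddSubgroup (E d)),
        IsClosed (F : Set (E d)) ∧ (F : Set (E d)) ≠ Set.univ ∧
        ∀ ℓ : Fin N,
          Y ℓ ((fun f : E d => θ k - θ ℓ + a + f) '' (F : Set (E d)))ᶜ = 0 := by
  rintro ⟨a, θ, F, hFcl, hFne, hY⟩
  have hF0 : (volume : Measure (E d)) (F : Set (E d)) = 0 :=
    volume_closed_proper_addSubgroup_eq_zero d F hFcl hFne
  -- each g ℓ vanishes a.e.
  have hg0 : ∀ ℓ, g ℓ =ᵐ[(volume : Measure (E d))] 0 := by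
    intro ℓ
    set c : E d := θ k - θ ℓ + a with hc
    set S : Set (E d) := (fun f : E d => c + f) '' (F : Set (E d)) with hS
    have hSeq : S = (fun x : E d => x + -c) ⁻¹' (F : Set (E d)) := by
      ext x
      constructor
      · rintro ⟨f, hf, rfl⟩; simpa [add_assoc] using hf
      · intro hx; exact ⟨x + -c, hx, by show c + (x + -c) = x; rw [add_comm x, add_neg_cancel_left]⟩
    have hSvol : (volume : Measure (E d)) S = 0 := by
      rw [hSeq]
      have := measure_preimage_add_right (volume : Measure (E d)) (-c) (F : Set (E d))
      rw [this]; exact hF0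
    set wd : Measure (E d) :=
      volume.withDensity (fun y => ENNReal.ofReal (g ℓ y)) with hwd
    have hle : wd ≤ Y ℓ := by
      rw [hdec ℓ]; exact Measure.le_add_right le_rfl
    have h1 : wd Sᶜ = 0 := le_antisymm ((hle _).trans (hY ℓ).le) zero_le
    have h2 : wd S = 0 :=
      (withDensity_absolutelyContinuous _ _) hSvol
    have huniv : wd Set.univ = 0 := by
      have := measure_union_le (μ := wd) S Sᶜ
      rw [Set.union_compl_self, h1, h2] at this
      simpa using this
    have hlint : ∫⁻ y, ENNReal.ofReal (g ℓ y) ∂(volume : Measure (E d)) = 0 := by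
      have := withDensity_apply (μ := (volume : Measure (E d)))
        (fun y => ENNReal.ofReal (g ℓ y)) MeasurableSet.univ
      rw [Measure.restrict_univ] at this
      rw [← this]; exact huniv
    have hae : (fun y => ENNReal.ofReal (g ℓ y)) =ᵐ[(volume : Measure (E d))] 0 :=
      (lintegral_eq_zero_iff ((hgmeas ℓ).ennreal_ofReal)).mp hlint
    filter_upwards [hae] with y hy
    have : ENNReal.ofReal (g ℓ y) = 0 := hy
    have := ENNReal.ofReal_eq_zero.mp this
    exact le_antisymm this (hgpos ℓ y)
  have hsum0 : (fun y => ∑ ℓ, g ℓ y) =ᵐ[(volume : Measure (E d))] 0 := by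
    have : ∀ᵐ y ∂(volume : Measure (E d)), ∀ ℓ, g ℓ y = 0 := by
      rw [MeasureTheory.ae_all_iff]
      intro ℓ; exact hg0 ℓ
    filter_upwards [this] with y hy
    simp [hy]
  have : ∫ y, (∑ ℓ, g ℓ y) ∂(volume : Measure (E d)) = 0 := by
    rw [integral_congr_ae hsum0]; simp
  rw [this] at hac
  exact lt_irrefl 0 hac
end
end

section
/- Let d ≥ 1 be an integer and δ > 0, C > 0, r ∈ (0,1) real numbers. For each real t ≥ 2 let φ_t : ℝᵈ → ℂ be measurable, and suppose there exist functions λ, L_t, R_t defined on the closed ball {ζ : ‖ζ‖ ≤ δ} with values in ℂ such that for all ζ with ‖ζ‖ < δ: φ_t(ζ) = λ(ζ)^{⌊t⌋}·L_t(ζ) + R_t(ζ), |L_t(ζ) − 1| ≤ C‖ζ‖ and |R_t(ζ)| ≤ C r^{⌊t⌋}, and such that for all ζ ∈ ℝᵈ with t^{-1/2}‖ζ‖ < δ: |λ(t^{-1/2}ζ)^{⌊t⌋} − exp(−‖ζ‖²/2)| ≤ C t^{-1/2}(1 + ‖ζ‖³) exp(−‖ζ‖²/8). Then there exists a constant C'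 > 0 (depending only on d, δ, C, r) such that for all t ≥ 2: ∫_{‖ζ‖ < δ√t} | φ_t(t^{-1/2}ζ) − exp(−‖ζ‖²/2) | dζ ≤ C'·( t^{-1/2} + t^{d/2} r^{⌊t⌋} ). -/
open MeasureTheory

noncomputable section

lemma poly_bound (x : ℝ) :
    (1 + x ^ 3) * Real.exp (-x ^ 2 / 8) ≤ 514 * Real.exp (-(1/16) * x ^ 2) := by
  have h4 : (1 + x ^ 2 / 32) ^ 2 ≤ Real.exp (x ^ 2 / 16) := by
    have h := Real.add_one_le_exp (x ^ 2 / 32)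
    rw [show x ^ 2 / 16 = x ^ 2 / 32 + x ^ 2 / 32 by ring, Real.exp_add]
    nlinarith [Real.exp_pos (x ^ 2 / 32), sq_nonneg x]
  have key : 1 + x ^ 3 ≤ 514 * Real.exp (x ^ 2 / 16) := by
    nlinarith [sq_nonneg (x ^ 2 - 2 * x), sq_nonneg (x - 1), sq_nonneg x,
      sq_nonneg (x ^ 2 - x), sq_nonneg (x + 1)]
  calc (1 + x ^ 3) * Real.exp (-x ^ 2 / 8)
      ≤ (514 * Real.exp (x ^ 2 / 16)) * Real.exp (-x ^ 2 / 8) :=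
        mul_le_mul_of_nonneg_right key (Real.exp_pos _).le
    _ = 514 * Real.exp (-(1/16) * x ^ 2) := by
        rw [mul_assoc, ← Real.exp_add]; ring_nf

lemma gauss_int (d : ℕ) :
    Integrable (fun v : E d => Real.exp (-(1/16 : ℝ) * ‖v‖ ^ 2)) := by
  have h := (GaussianFourier.integrable_cexp_neg_mul_sq_norm_add (V := E d)
    (b := (1/16 : ℂ)) (by norm_num) 0 0).norm
  refine h.congr (Filter.Eventually.of_forall fun v => ?_)
  simp [Complex.norm_exp, ← Complex.ofReal_pow]

lemma G_int (d : ℕ) :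
    Integrable (fun ζ : E d => (1 + ‖ζ‖ ^ 3) * Real.exp (-‖ζ‖ ^ 2 / 8)) := by
  apply Integrable.mono' ((gauss_int d).const_mul 514)
  · apply Continuous.aestronglyMeasurable
    continuity
  · filter_upwards with ζ
    rw [Real.norm_eq_abs, abs_of_nonneg (by positivity)]
    exact poly_bound ‖ζ‖

set_option maxHeartbeats 1000000 in
theorem stmt14 (d : ℕ) (hd : 1 ≤ d) (δ C r : ℝ)
    (hδ : 0 < δ) (hC : 0 < C) (hr0 : 0 < r) (hr1 : r < 1)
    (φ : ℝ → E d → ℂ) (hφ : ∀ t : ℝ, 2 ≤ t → Measurable (φ t))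
    (lam : E d → ℂ) (L R : ℝ → E d → ℂ)
    (hdec : ∀ t : ℝ, 2 ≤ t → ∀ ζ : E d, ‖ζ‖ < δ →
      φ t ζ = lam ζ ^ ⌊t⌋₊ * L t ζ + R t ζ)
    (hL : ∀ t : ℝ, 2 ≤ t → ∀ ζ : E d, ‖ζ‖ < δ → ‖L t ζ - 1‖ ≤ C * ‖ζ‖)
    (hR : ∀ t : ℝ, 2 ≤ t → ∀ ζ : E d, ‖ζ‖ < δ → ‖R t ζ‖ ≤ C * r ^ ⌊t⌋₊)
    (hlam : ∀ t : ℝ, 2 ≤ t → ∀ ζ : E d, t ^ (-(1 : ℝ) / 2) * ‖ζ‖ < δ →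
      ‖lam ((t ^ (-(1 : ℝ) / 2) : ℝ) • ζ) ^ ⌊t⌋₊
          - Complex.exp (-(‖ζ‖ : ℂ) ^ 2 / 2)‖
        ≤ C * t ^ (-(1 : ℝ) / 2) * (1 + ‖ζ‖ ^ 3) * Real.exp (-‖ζ‖ ^ 2 / 8)) :
    ∃ C' > (0 : ℝ), ∀ t : ℝ, 2 ≤ t →
      (∫ ζ in Metric.ball (0 : E d) (δ * Real.sqrt t),
          ‖φ t ((t ^ (-(1 : ℝ) / 2) : ℝ) • ζ)
            - Complex.exp (-(‖ζ‖ : ℂ) ^ 2 / 2)‖ ∂(volume : Measure (E d)))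
        ≤ C' * (t ^ (-(1 : ℝ) / 2) + t ^ ((d : ℝ) / 2) * r ^ ⌊t⌋₊) := by
  set K : ℝ := ∫ ζ : E d, (1 + ‖ζ‖ ^ 3) * Real.exp (-‖ζ‖ ^ 2 / 8) with hK
  have hK0 : 0 ≤ K := integral_nonneg fun ζ => by positivity
  set V1 : ℝ := (volume (Metric.ball (0 : E d) 1)).toReal with hV1
  have hV10 : 0 ≤ V1 := ENNReal.toReal_nonneg
  refine ⟨C * (2 + C * δ) * K + C * δ ^ d * V1 + 1, by positivity, fun t ht => ?_⟩
  have ht0 : (0 : ℝ) < t := by linarith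
  set s : ℝ := t ^ (-(1 : ℝ) / 2) with hs
  have hs0 : 0 < s := Real.rpow_pos_of_pos ht0 _
  have hsqrt : Real.sqrt t = t ^ ((1 : ℝ) / 2) := Real.sqrt_eq_rpow t
  have hst : s * Real.sqrt t = 1 := by
    rw [hsqrt, hs, ← Real.rpow_add ht0]
    norm_num
  set n := ⌊t⌋₊ with hn
  -- the majorant
  set A : ℝ := C * (2 + C * δ) * s with hA
  have hA0 : 0 ≤ A := by positivity
  set B : Set (E d) := Metric.ball (0 : E d) (δ * Real.sqrt t) with hB
  have hBfin : volume B < ⊤ := measure_ball_lt_top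
  -- pointwise bound on the ball
  have hpt : ∀ ζ ∈ B, ‖φ t (s • ζ) - Complex.exp (-(‖ζ‖ : ℂ) ^ 2 / 2)‖
      ≤ A * ((1 + ‖ζ‖ ^ 3) * Real.exp (-‖ζ‖ ^ 2 / 8)) + C * r ^ n := by
    intro ζ hζ
    rw [hB, Metric.mem_ball, dist_zero_right] at hζ
    have hsn : s * ‖ζ‖ < δ := by
      calc s * ‖ζ‖ < s * (δ * Real.sqrt t) :=
            mul_lt_mul_of_pos_left hζ hs0
        _ = δ * (s * Real.sqrt t) := by ring
        _ = δ := by rw [hst, mul_one]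
    have hnorm : ‖s • ζ‖ = s * ‖ζ‖ := by
      rw [norm_smul, Real.norm_of_nonneg hs0.le]
    have hlt : ‖s • ζ‖ < δ := by rw [hnorm]; exact hsn
    set g : ℂ := Complex.exp (-(‖ζ‖ : ℂ) ^ 2 / 2) with hg
    have hgabs : ‖g‖ = Real.exp (-‖ζ‖ ^ 2 / 2) := by
      rw [hg, show (-(‖ζ‖ : ℂ) ^ 2 / 2) = ((-‖ζ‖ ^ 2 / 2 : ℝ) : ℂ) by push_cast; ring,
        Complex.norm_exp_ofReal]
    rw [hdec t ht (s • ζ) hlt]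
    have hsplit : lam (s • ζ) ^ n * L t (s • ζ) + R t (s • ζ) - g
        = (lam (s • ζ) ^ n - g) * L t (s • ζ) + g * (L t (s • ζ) - 1) + R t (s • ζ) := by
      ring
    rw [hsplit]
    have h1 : ‖(lam (s • ζ) ^ n - g) * L t (s • ζ)‖
        ≤ (C * s * (1 + ‖ζ‖ ^ 3) * Real.exp (-‖ζ‖ ^ 2 / 8)) * (1 + C * δ) := by
      rw [norm_mul]
      have ha := hlam t ht ζ hsn
      have hb : ‖L t (s • ζ)‖ ≤ 1 + C * δ := by
        have := hL t ht (s • ζ) hlt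
        have h2 : ‖L t (s • ζ)‖ ≤ ‖L t (s • ζ) - 1‖ + 1 := by
          simpa using norm_add_le (L t (s • ζ) - 1) 1
        have h3 : C * ‖s • ζ‖ ≤ C * δ := by
          apply mul_le_mul_of_nonneg_left hlt.le hC.le
        linarith
      exact mul_le_mul ha hb (norm_nonneg _) (by positivity)
    have h2 : ‖g * (L t (s • ζ) - 1)‖
        ≤ C * s * (1 + ‖ζ‖ ^ 3) * Real.exp (-‖ζ‖ ^ 2 / 8) := by
      rw [norm_mul, hgabs]
      have hb := hL t ht (s • ζ) hlt
      rw [hnorm] at hb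
      calc Real.exp (-‖ζ‖ ^ 2 / 2) * ‖L t (s • ζ) - 1‖
          ≤ Real.exp (-‖ζ‖ ^ 2 / 8) * (C * (s * ‖ζ‖)) := by
            apply mul_le_mul _ hb (norm_nonneg _) (Real.exp_pos _).le
            exact Real.exp_le_exp.2 (by nlinarith [sq_nonneg ‖ζ‖])
        _ = C * s * ‖ζ‖ * Real.exp (-‖ζ‖ ^ 2 / 8) := by ring
        _ ≤ C * s * (1 + ‖ζ‖ ^ 3) * Real.exp (-‖ζ‖ ^ 2 / 8) := by
            have hx : ‖ζ‖ ≤ 1 + ‖ζ‖ ^ 3 := by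
              nlinarith [norm_nonneg ζ, sq_nonneg (‖ζ‖ - 1), sq_nonneg ‖ζ‖]
            have he := (Real.exp_pos (-‖ζ‖ ^ 2 / 8)).le
            have h := mul_le_mul_of_nonneg_left hx (by positivity : (0:ℝ) ≤ C * s)
            exact mul_le_mul_of_nonneg_right h he
    have h3 := hR t ht (s • ζ) hlt
    calc ‖(lam (s • ζ) ^ n - g) * L t (s • ζ) + g * (L t (s • ζ) - 1) + R t (s • ζ)‖
        ≤ ‖(lam (s • ζ) ^ n - g) * L t (s • ζ) + g * (L t (s • ζ) - 1)‖
            + ‖R t (s • ζ)‖ := norm_add_le _ _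
      _ ≤ ‖(lam (s • ζ) ^ n - g) * L t (s • ζ)‖
            + ‖g * (L t (s • ζ) - 1)‖ + ‖R t (s • ζ)‖ := by
          have := norm_add_le ((lam (s • ζ) ^ n - g) * L t (s • ζ))
            (g * (L t (s • ζ) - 1))
          linarith
      _ ≤ (C * s * (1 + ‖ζ‖ ^ 3) * Real.exp (-‖ζ‖ ^ 2 / 8)) * (1 + C * δ)
            + C * s * (1 + ‖ζ‖ ^ 3) * Real.exp (-‖ζ‖ ^ 2 / 8) + C * r ^ n := by
          linarith
      _ = A * ((1 + ‖ζ‖ ^ 3) * Real.exp (-‖ζ‖ ^ 2 / 8)) + C * r ^ n := by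
          rw [hA]; ring
  -- integrability of the majorant on the ball
  have hG : Integrable (fun ζ : E d => A * ((1 + ‖ζ‖ ^ 3) * Real.exp (-‖ζ‖ ^ 2 / 8))) :=
    (G_int d).const_mul A
  have hconst : IntegrableOn (fun _ : E d => C * r ^ n) B :=
    integrableOn_const hBfin.ne
  have hFint : IntegrableOn
      (fun ζ : E d => A * ((1 + ‖ζ‖ ^ 3) * Real.exp (-‖ζ‖ ^ 2 / 8)) + C * r ^ n) B :=
    hG.integrableOn.add hconst
  -- compare the integrals
  have hstep1 : (∫ ζ in B, ‖φ t (s • ζ) - Complex.exp (-(‖ζ‖ : ℂ) ^ 2 / 2)‖)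
      ≤ ∫ ζ in B, (A * ((1 + ‖ζ‖ ^ 3) * Real.exp (-‖ζ‖ ^ 2 / 8)) + C * r ^ n) := by
    apply integral_mono_of_nonneg
    · exact Filter.Eventually.of_forall fun ζ => norm_nonneg _
    · exact hFint
    · exact (ae_restrict_iff' Metric.isOpen_ball.measurableSet).2
        (Filter.Eventually.of_forall hpt)
  have hstep2 : (∫ ζ in B, (A * ((1 + ‖ζ‖ ^ 3) * Real.exp (-‖ζ‖ ^ 2 / 8)) + C * r ^ n))
      = A * (∫ ζ in B, (1 + ‖ζ‖ ^ 3) * Real.exp (-‖ζ‖ ^ 2 / 8))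
        + C * r ^ n * (volume B).toReal := by
    rw [integral_add hG.integrableOn hconst, integral_const_mul, setIntegral_const,
      smul_eq_mul, Measure.real]
    ring
  have hstep3 : (∫ ζ in B, (1 + ‖ζ‖ ^ 3) * Real.exp (-‖ζ‖ ^ 2 / 8)) ≤ K := by
    rw [hK]
    exact setIntegral_le_integral (G_int d)
      (Filter.Eventually.of_forall fun ζ => by positivity)
  -- volume of the ball
  have hrad : 0 ≤ δ * Real.sqrt t := by positivity
  haveI : Nontrivial (E d) := Module.nontrivial_of_finrank_pos (R := ℝ)
    (by rw [finrank_euclideanSpace_fin]; omega)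
  have hvol : (volume B).toReal = (δ * Real.sqrt t) ^ d * V1 := by
    rw [hB, Measure.addHaar_ball volume (0 : E d) hrad, ENNReal.toReal_mul,
      ENNReal.toReal_ofReal (by positivity), finrank_euclideanSpace_fin, hV1]
  have hpow : (δ * Real.sqrt t) ^ d = δ ^ d * t ^ ((d : ℝ) / 2) := by
    rw [mul_pow, hsqrt, ← Real.rpow_natCast (t ^ ((1:ℝ)/2)) d, ← Real.rpow_mul ht0.le]
    congr 1
    ring
  -- put it together
  have hmain : (∫ ζ in B, ‖φ t (s • ζ) - Complex.exp (-(‖ζ‖ : ℂ) ^ 2 / 2)‖)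
      ≤ C * (2 + C * δ) * K * s + C * δ ^ d * V1 * (t ^ ((d : ℝ) / 2) * r ^ n) := by
    calc (∫ ζ in B, ‖φ t (s • ζ) - Complex.exp (-(‖ζ‖ : ℂ) ^ 2 / 2)‖)
        ≤ A * (∫ ζ in B, (1 + ‖ζ‖ ^ 3) * Real.exp (-‖ζ‖ ^ 2 / 8))
            + C * r ^ n * (volume B).toReal := by rw [← hstep2]; exact hstep1
      _ ≤ A * K + C * r ^ n * ((δ ^ d * t ^ ((d : ℝ) / 2)) * V1) := by
          rw [hvol, hpow]
          exact add_le_add (mul_le_mul_of_nonneg_left hstep3 hA0) le_rfl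
      _ = C * (2 + C * δ) * K * s + C * δ ^ d * V1 * (t ^ ((d : ℝ) / 2) * r ^ n) := by
          rw [hA]; ring
  have hrpos : (0 : ℝ) < r ^ n := pow_pos hr0 n
  have htd : (0 : ℝ) < t ^ ((d : ℝ) / 2) := Real.rpow_pos_of_pos ht0 _
  calc (∫ ζ in B, ‖φ t (s • ζ) - Complex.exp (-(‖ζ‖ : ℂ) ^ 2 / 2)‖)
      ≤ C * (2 + C * δ) * K * s + C * δ ^ d * V1 * (t ^ ((d : ℝ) / 2) * r ^ n) := hmain
    _ ≤ (C * (2 + C * δ) * K + C * δ ^ d * V1 + 1) * (s + t ^ ((d : ℝ) / 2) * r ^ n) := by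
        have ha1 : (0:ℝ) ≤ C * (2 + C * δ) * K := by positivity
        have ha2 : (0:ℝ) ≤ C * δ ^ d * V1 := by positivity
        have hu : (0:ℝ) ≤ s := hs0.le
        have hv : (0:ℝ) ≤ t ^ ((d : ℝ) / 2) * r ^ n := (mul_pos htd hrpos).le
        nlinarith [mul_nonneg ha1 hv, mul_nonneg ha2 hu, hu, hv]
end
end
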